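/- For a symmetric positive semidefinite matrix K, an index subset I with K_{I,I} invertible, and an index j ∉ I with (K_{I∪{j},I∪{j}}) invertible, the nuclear objective satisfies Tr[(K²)_{I∪{j},I∪{j}}(K_{I∪{j},I∪{j}})⁻¹] = Tr[(K²)_{I,I}(K_{I,I})⁻¹] + (K̃²)_{j,j}/K̃_{j,j}, where K̃ = K − K_{:,I}(K_{I,I})⁻¹K_{I,:}. -/

import Mathlib

open Matrix BigOperators

/-- The inclusion of a finite set of indices. -/
def incl {n : ℕ} (J : Finset (Fin n)) : {x // x ∈ J} → Fin n := fun j => j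

noncomputable def Binv' {n : ℕ} (K : Matrix (Fin n) (Fin n) ℝ) (I : Finset (Fin n)) :
    Fin n → Fin n → ℝ := fun p q =>
  if h : p ∈ I ∧ q ∈ I then (K.submatrix (incl I) (incl I))⁻¹ ⟨p, h.1⟩ ⟨q, h.2⟩ else 0

noncomputable def vv {n : ℕ} (K : Matrix (Fin n) (Fin n) ℝ) (I : Finset (Fin n)) (j : Fin n) :
    Fin n → ℝ := fun q =>
  if q = j then 1 else if q ∈ I then -(∑ r ∈ I, Binv' K I q r * K r j) else 0

/-- For an SPSD matrix `K`, an index set `I` with `K_{I,I}` invertible, and `j ∉ I` with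
`K_{I∪{j},I∪{j}}` invertible and `K̃_{j,j} > 0` where `K̃ = K − K_{:,I}(K_{I,I})⁻¹K_{I,:}`,
the nuclear objective satisfies
`Tr[(K²)_{I∪{j},I∪{j}}(K_{I∪{j},I∪{j}})⁻¹] = Tr[(K²)_{I,I}(K_{I,I})⁻¹] + (K̃²)_{j,j}/K̃_{j,j}`. -/
theorem stmt_3 (n : ℕ) (K : Matrix (Fin n) (Fin n) ℝ) (hK : K.PosSemidef)
    (I : Finset (Fin n)) (j : Fin n) (hj : j ∉ I)
    (hI : IsUnit (K.submatrix (incl I) (incl I)).det)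
    (hIj : IsUnit (K.submatrix (incl (insert j I)) (incl (insert j I))).det)
    (Kt : Matrix (Fin n) (Fin n) ℝ)
    (hKt : Kt = K - K.submatrix id (incl I) * (K.submatrix (incl I) (incl I))⁻¹ *
        K.submatrix (incl I) id)
    (hKtj : 0 < Kt j j) :
    ((K * K).submatrix (incl (insert j I)) (incl (insert j I)) *
        (K.submatrix (incl (insert j I)) (incl (insert j I)))⁻¹).trace
      = ((K * K).submatrix (incl I) (incl I) *
          (K.submatrix (incl I) (incl I))⁻¹).trace
        + (Kt * Kt) j j / Kt j j := by
  have hsne : Kt j j ≠ 0 := ne_of_gt hKtj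
  have hKsym : ∀ p q, K p q = K q p := fun p q =>
    (hK.1.apply p q).symm.trans (star_trivial _)
  have hBent : ∀ p q (hp : p ∈ I) (hq : q ∈ I),
      Binv' K I p q = (K.submatrix (incl I) (incl I))⁻¹ ⟨p, hp⟩ ⟨q, hq⟩ := by
    intro p q hp hq
    simp [Binv', hp, hq]
  have hBoutL : ∀ p q, p ∉ I → Binv' K I p q = 0 := by
    intro p q hp
    simp [Binv', hp]
  have hBoutR : ∀ p q, q ∉ I → Binv' K I p q = 0 := by
    intro p q hq
    simp [Binv', hq]
  -- symmetry of B⁻¹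
  have hBTsym : ((K.submatrix (incl I) (incl I))⁻¹)ᵀ = (K.submatrix (incl I) (incl I))⁻¹ := by
    rw [Matrix.transpose_nonsing_inv]
    congr 1
    ext a b
    exact hKsym _ _
  have hBsym : ∀ p q, Binv' K I p q = Binv' K I q p := by
    intro p q
    by_cases hp : p ∈ I
    · by_cases hq : q ∈ I
      · rw [hBent p q hp hq, hBent q p hq hp]
        exact congrFun (congrFun hBTsym.symm ⟨p, hp⟩) ⟨q, hq⟩
      · rw [hBoutR _ _ hq, hBoutL _ _ hq]
    · rw [hBoutL _ _ hp, hBoutR _ _ hp]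
  -- B * B⁻¹ = 1 entrywise
  have L1 : ∀ p q (hp : p ∈ I) (hq : q ∈ I),
      ∑ r ∈ I, K p r * Binv' K I r q = if p = q then 1 else 0 := by
    intro p q hp hq
    have h1 := Matrix.mul_nonsing_inv _ hI
    have h2 := congrFun (congrFun h1 ⟨p, hp⟩) ⟨q, hq⟩
    rw [Matrix.mul_apply] at h2
    calc ∑ r ∈ I, K p r * Binv' K I r q
        = ∑ r : {x // x ∈ I}, K p ↑r * Binv' K I ↑r q :=
          (Finset.sum_coe_sort I (fun r => K p r * Binv' K I r q)).symm
      _ = ∑ r : {x // x ∈ I}, K.submatrix (incl I) (incl I) ⟨p, hp⟩ r *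
            (K.submatrix (incl I) (incl I))⁻¹ r ⟨q, hq⟩ := by
          refine Finset.sum_congr rfl fun r _ => ?_
          rw [hBent _ _ r.2 hq]
          rfl
      _ = (1 : Matrix {x // x ∈ I} {x // x ∈ I} ℝ) ⟨p, hp⟩ ⟨q, hq⟩ := h2
      _ = if p = q then 1 else 0 := by
          simp [Matrix.one_apply, Subtype.ext_iff]
  -- Kt entrywise
  have hKt_entry : ∀ p q, Kt p q =
      K p q - ∑ b ∈ I, (∑ a ∈ I, K p a * Binv' K I a b) * K b q := by
    intro p q
    rw [hKt]
    have : (K.submatrix id (incl I) * (K.submatrix (incl I) (incl I))⁻¹ *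
        K.submatrix (incl I) id) p q
        = ∑ b ∈ I, (∑ a ∈ I, K p a * Binv' K I a b) * K b q := by
      rw [Matrix.mul_apply]
      calc ∑ b : {x // x ∈ I}, (K.submatrix id (incl I) * (K.submatrix (incl I) (incl I))⁻¹) p b *
              K.submatrix (incl I) id b q
          = ∑ b : {x // x ∈ I}, (∑ a ∈ I, K p a * Binv' K I a ↑b) * K ↑b q := by
            refine Finset.sum_congr rfl fun b _ => ?_
            rw [Matrix.mul_apply]
            congr 1
            calc ∑ a : {x // x ∈ I}, K.submatrix id (incl I) p a *
                    (K.submatrix (incl I) (incl I))⁻¹ a b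
                = ∑ a : {x // x ∈ I}, K p ↑a * Binv' K I ↑a ↑b := by
                  refine Finset.sum_congr rfl fun a _ => ?_
                  rw [hBent _ _ a.2 b.2]
                  rfl
              _ = ∑ a ∈ I, K p a * Binv' K I a ↑b :=
                  Finset.sum_coe_sort I (fun a => K p a * Binv' K I a ↑b)
        _ = ∑ b ∈ I, (∑ a ∈ I, K p a * Binv' K I a b) * K b q :=
            Finset.sum_coe_sort I (fun b => (∑ a ∈ I, K p a * Binv' K I a b) * K b q)
    rw [Matrix.sub_apply, this]
  -- vv facts
  have hvj : vv K I j j = 1 := by simp [vv]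
  have hvI : ∀ q, q ∈ I → vv K I j q = -(∑ r ∈ I, Binv' K I q r * K r j) := by
    intro q hq
    have : q ≠ j := fun h => hj (h ▸ hq)
    simp [vv, this, hq]
  have hv_out : ∀ q, q ∉ insert j I → vv K I j q = 0 := by
    intro q hq
    rw [Finset.mem_insert, not_or] at hq
    simp [vv, hq.1, hq.2]
  -- L3 : K v = Kt e_j
  have L3 : ∀ q, ∑ r, K q r * vv K I j r = Kt q j := by
    intro q
    have hres : ∑ r ∈ insert j I, K q r * vv K I j r = ∑ r, K q r * vv K I j r :=
      Finset.sum_subset (Finset.subset_univ _) (fun x _ hx => by rw [hv_out x hx, mul_zero])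
    rw [← hres, Finset.sum_insert hj, hvj, mul_one, hKt_entry q j]
    have h1 : ∑ r ∈ I, K q r * vv K I j r
        = -∑ r ∈ I, ∑ a ∈ I, K q r * (Binv' K I r a * K a j) := by
      rw [← Finset.sum_neg_distrib]
      refine Finset.sum_congr rfl fun r hr => ?_
      rw [hvI r hr, mul_neg, Finset.mul_sum]
    have h2 : ∑ b ∈ I, (∑ a ∈ I, K q a * Binv' K I a b) * K b j
        = ∑ r ∈ I, ∑ a ∈ I, K q r * (Binv' K I r a * K a j) := by
      simp_rw [Finset.sum_mul, mul_assoc]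
      exact Finset.sum_comm
    rw [h1, h2]
    ring
  -- L3' : restricted version used in inverse verification
  have L3' : ∀ q, K q j + ∑ r ∈ I, K q r * vv K I j r = Kt q j := by
    intro q
    rw [← L3 q]
    rw [← Finset.sum_subset (Finset.subset_univ (insert j I))
      (fun x _ hx => by rw [hv_out x hx, mul_zero])]
    rw [Finset.sum_insert hj, hvj, mul_one]
  -- L4 : Kt p j = 0 for p ∈ I
  have L4 : ∀ p, p ∈ I → Kt p j = 0 := by
    intro p hp
    rw [hKt_entry p j]
    have : ∑ b ∈ I, (∑ a ∈ I, K p a * Binv' K I a b) * K b j = K p j := by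
      have h1 : ∀ b ∈ I, (∑ a ∈ I, K p a * Binv' K I a b) * K b j
          = (if p = b then 1 else 0) * K b j := by
        intro b hb
        rw [L1 p b hp hb]
      rw [Finset.sum_congr rfl h1]
      simp [Finset.sum_ite_eq, hp]
    rw [this, sub_self]
  -- Kt symmetric
  have hKtsym : ∀ p q, Kt p q = Kt q p := by
    intro p q
    rw [hKt_entry p q, hKt_entry q p, hKsym p q]
    congr 1
    simp_rw [Finset.sum_mul, mul_assoc]
    rw [Finset.sum_comm]
    refine Finset.sum_congr rfl fun a _ => Finset.sum_congr rfl fun b _ => ?_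
    rw [hKsym p a, hKsym b q, hBsym a b]
    ring
  -- the inverse of the bigger submatrix
  have hAinv : (K.submatrix (incl (insert j I)) (incl (insert j I)))⁻¹ =
      Matrix.of (fun p q : {x // x ∈ insert j I} =>
        Binv' K I ↑p ↑q + vv K I j ↑p * vv K I j ↑q / Kt j j) := by
    apply Matrix.inv_eq_right_inv
    ext p q
    rw [Matrix.mul_apply]
    have hsum : ∑ r : {x // x ∈ insert j I},
        K.submatrix (incl (insert j I)) (incl (insert j I)) p r *
          Matrix.of (fun p q : {x // x ∈ insert j I} =>
            Binv' K I ↑p ↑q + vv K I j ↑p * vv K I j ↑q / Kt j j) r q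
        = ∑ r ∈ insert j I, K ↑p r * (Binv' K I r ↑q + vv K I j r * vv K I j ↑q / Kt j j) :=
      Finset.sum_coe_sort (insert j I)
        (fun r => K ↑p r * (Binv' K I r ↑q + vv K I j r * vv K I j ↑q / Kt j j))
    rw [hsum, Finset.sum_insert hj, hBoutL _ _ hj, hvj]
    have hsplit : ∑ r ∈ I, K ↑p r * (Binv' K I r ↑q + vv K I j r * vv K I j ↑q / Kt j j)
        = ∑ r ∈ I, K ↑p r * Binv' K I r ↑q
          + (∑ r ∈ I, K ↑p r * vv K I j r) * (vv K I j ↑q / Kt j j) := by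
      rw [Finset.sum_mul]
      rw [← Finset.sum_add_distrib]
      refine Finset.sum_congr rfl fun r _ => by ring
    rw [hsplit]
    have hcollect : K ↑p j * (0 + 1 * vv K I j ↑q / Kt j j)
          + (∑ r ∈ I, K ↑p r * Binv' K I r ↑q
            + (∑ r ∈ I, K ↑p r * vv K I j r) * (vv K I j ↑q / Kt j j))
        = ∑ r ∈ I, K ↑p r * Binv' K I r ↑q
          + Kt ↑p j * vv K I j ↑q / Kt j j := by
      rw [← L3' ↑p]
      ring
    rw [hcollect]
    rcases Finset.mem_insert.mp p.2 with hp | hp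
    · -- p = j
      rw [hp, mul_div_cancel_left₀ _ hsne]
      rcases Finset.mem_insert.mp q.2 with hq | hq
      · -- q = j
        have hpq : p = q := Subtype.ext (hp.trans hq.symm)
        have hz : ∑ r ∈ I, K j r * Binv' K I r ↑q = 0 :=
          Finset.sum_eq_zero fun r _ => by rw [hq, hBoutR _ _ hj, mul_zero]
        rw [hz, hq, hvj, Matrix.one_apply, if_pos hpq, zero_add]
      · -- q ∈ I
        have hpq : p ≠ q := fun h => hj (by rw [← h] at hq; exact hp ▸ hq)
        rw [hvI _ hq]
        have h1 : ∑ r ∈ I, K j r * Binv' K I r ↑q = ∑ r ∈ I, Binv' K I ↑q r * K r j := by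
          refine Finset.sum_congr rfl fun r _ => ?_
          rw [hKsym j r, hBsym r ↑q]
          ring
        rw [h1, Matrix.one_apply_ne hpq]
        ring
    · -- p ∈ I
      rw [L4 _ hp, zero_mul, zero_div, add_zero]
      rcases Finset.mem_insert.mp q.2 with hq | hq
      · have hpq : p ≠ q := fun h => hj (by rw [h] at hp; exact hq ▸ hp)
        have : ∑ r ∈ I, K ↑p r * Binv' K I r ↑q = 0 := by
          refine Finset.sum_eq_zero fun r _ => ?_
          rw [hq, hBoutR _ _ hj, mul_zero]
        rw [this, Matrix.one_apply_ne hpq]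
      · rw [L1 _ _ hp hq, Matrix.one_apply]
        by_cases hpq : p = q
        · rw [if_pos (congrArg Subtype.val hpq), if_pos hpq]
        · rw [if_neg (fun e => hpq (Subtype.ext e)), if_neg hpq]
  -- traces entrywise
  have htrI : ((K * K).submatrix (incl I) (incl I) * (K.submatrix (incl I) (incl I))⁻¹).trace
      = ∑ p ∈ I, ∑ r ∈ I, (K * K) p r * Binv' K I r p := by
    rw [Matrix.trace]
    calc ∑ p : {x // x ∈ I}, ((K * K).submatrix (incl I) (incl I) *
            (K.submatrix (incl I) (incl I))⁻¹).diag p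
        = ∑ p : {x // x ∈ I}, ∑ r ∈ I, (K * K) ↑p r * Binv' K I r ↑p := by
          refine Finset.sum_congr rfl fun p _ => ?_
          rw [Matrix.diag_apply, Matrix.mul_apply]
          calc ∑ r : {x // x ∈ I}, (K * K).submatrix (incl I) (incl I) p r *
                  (K.submatrix (incl I) (incl I))⁻¹ r p
              = ∑ r : {x // x ∈ I}, (K * K) ↑p ↑r * Binv' K I ↑r ↑p := by
                refine Finset.sum_congr rfl fun r _ => ?_
                rw [hBent _ _ r.2 p.2]
                rfl
            _ = ∑ r ∈ I, (K * K) ↑p r * Binv' K I r ↑p :=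
                Finset.sum_coe_sort I (fun r => (K * K) ↑p r * Binv' K I r ↑p)
      _ = ∑ p ∈ I, ∑ r ∈ I, (K * K) p r * Binv' K I r p :=
          Finset.sum_coe_sort I (fun p => ∑ r ∈ I, (K * K) p r * Binv' K I r p)
  have htrJ : ((K * K).submatrix (incl (insert j I)) (incl (insert j I)) *
        (K.submatrix (incl (insert j I)) (incl (insert j I)))⁻¹).trace
      = ∑ p ∈ insert j I, ∑ r ∈ insert j I,
          (K * K) p r * (Binv' K I r p + vv K I j r * vv K I j p / Kt j j) := by
    rw [hAinv, Matrix.trace]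
    calc ∑ p : {x // x ∈ insert j I}, ((K * K).submatrix (incl (insert j I)) (incl (insert j I)) *
            Matrix.of (fun p q : {x // x ∈ insert j I} =>
              Binv' K I ↑p ↑q + vv K I j ↑p * vv K I j ↑q / Kt j j)).diag p
        = ∑ p : {x // x ∈ insert j I}, ∑ r ∈ insert j I,
            (K * K) ↑p r * (Binv' K I r ↑p + vv K I j r * vv K I j ↑p / Kt j j) := by
          refine Finset.sum_congr rfl fun p _ => ?_
          rw [Matrix.diag_apply, Matrix.mul_apply]
          exact Finset.sum_coe_sort (insert j I)
            (fun r => (K * K) ↑p r * (Binv' K I r ↑p + vv K I j r * vv K I j ↑p / Kt j j))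
      _ = ∑ p ∈ insert j I, ∑ r ∈ insert j I,
            (K * K) p r * (Binv' K I r p + vv K I j r * vv K I j p / Kt j j) :=
          Finset.sum_coe_sort (insert j I) (fun p => ∑ r ∈ insert j I,
            (K * K) p r * (Binv' K I r p + vv K I j r * vv K I j p / Kt j j))
  rw [htrI, htrJ]
  -- split the big sum
  have hsplit : ∀ p, ∑ r ∈ insert j I,
        (K * K) p r * (Binv' K I r p + vv K I j r * vv K I j p / Kt j j)
      = ∑ r ∈ insert j I, (K * K) p r * Binv' K I r p
        + ∑ r ∈ insert j I, (K * K) p r * (vv K I j r * vv K I j p / Kt j j) := by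
    intro p
    rw [← Finset.sum_add_distrib]
    exact Finset.sum_congr rfl fun r _ => by ring
  simp_rw [hsplit]
  rw [Finset.sum_add_distrib]
  -- first part equals the I-trace
  have hpart1 : ∑ p ∈ insert j I, ∑ r ∈ insert j I, (K * K) p r * Binv' K I r p
      = ∑ p ∈ I, ∑ r ∈ I, (K * K) p r * Binv' K I r p := by
    have hin : ∀ p, ∑ r ∈ insert j I, (K * K) p r * Binv' K I r p
        = ∑ r ∈ I, (K * K) p r * Binv' K I r p := by
      intro p
      rw [Finset.sum_insert hj, hBoutL _ _ hj, mul_zero, zero_add]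
    simp_rw [hin]
    rw [Finset.sum_insert hj]
    have : ∑ r ∈ I, (K * K) j r * Binv' K I r j = 0 :=
      Finset.sum_eq_zero fun r _ => by rw [hBoutR _ _ hj, mul_zero]
    rw [this, zero_add]
  rw [hpart1]
  -- second part equals the correction term
  have hpart2 : ∑ p ∈ insert j I, ∑ r ∈ insert j I,
        (K * K) p r * (vv K I j r * vv K I j p / Kt j j)
      = (Kt * Kt) j j / Kt j j := by
    have hext : ∑ p ∈ insert j I, ∑ r ∈ insert j I,
          (K * K) p r * (vv K I j r * vv K I j p / Kt j j)
        = ∑ p, ∑ r, (K * K) p r * (vv K I j r * vv K I j p / Kt j j) := by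
      have hin : ∀ p, ∑ r ∈ insert j I, (K * K) p r * (vv K I j r * vv K I j p / Kt j j)
          = ∑ r, (K * K) p r * (vv K I j r * vv K I j p / Kt j j) := fun p =>
        Finset.sum_subset (Finset.subset_univ _)
          (fun x _ hx => by rw [hv_out x hx, zero_mul, zero_div, mul_zero])
      simp_rw [hin]
      exact Finset.sum_subset (Finset.subset_univ _)
        (fun x _ hx => Finset.sum_eq_zero fun r _ => by
          rw [hv_out x hx, mul_zero, zero_div, mul_zero])
    rw [hext]
    have hKK : ∀ p r, (K * K) p r = ∑ q, K p q * K q r := fun p r => Matrix.mul_apply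
    have step1 : ∑ p, ∑ r, (K * K) p r * (vv K I j r * vv K I j p / Kt j j)
        = ∑ q, (∑ p, K q p * vv K I j p) * (∑ r, K q r * vv K I j r) / Kt j j := by
      have e1 : ∀ p r : Fin n, (K * K) p r * (vv K I j r * vv K I j p / Kt j j)
          = ∑ q, (K q p * vv K I j p) * (K q r * vv K I j r) / Kt j j := by
        intro p r
        rw [hKK p r, Finset.sum_mul]
        refine Finset.sum_congr rfl fun q _ => ?_
        rw [hKsym p q]
        ring
      simp_rw [e1]
      have e2 : ∀ p : Fin n, ∑ r, ∑ q, (K q p * vv K I j p) * (K q r * vv K I j r) / Kt j j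
          = ∑ q, ∑ r, (K q p * vv K I j p) * (K q r * vv K I j r) / Kt j j :=
        fun p => Finset.sum_comm
      simp_rw [e2]
      rw [Finset.sum_comm]
      refine Finset.sum_congr rfl fun q _ => ?_
      rw [Finset.sum_mul_sum]
      simp_rw [Finset.sum_div]
    rw [step1]
    have : ∀ q, (∑ p, K q p * vv K I j p) * (∑ r, K q r * vv K I j r) / Kt j j
        = Kt j q * Kt q j / Kt j j := by
      intro q
      rw [L3 q, hKtsym j q]
    simp_rw [this]
    rw [← Finset.sum_div]
    congr 1
  rw [hpart2]
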